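/- One has ∫_{[0,1]⁴} 𝟙_{t+u+v+w < 1} / ((u + w)(u + v + w)) dt du dv dw = 1/2, where 𝟙 denotes the indicator function; in particular the integrand is Lebesgue integrable on [0,1]⁴. -/

import Mathlib

open MeasureTheory Topology

open Set in
/-- `exp x ≤ 1 + x + x²/2` for `x ≤ 0`. -/
lemma A3.exp_le_quadratic {x : ℝ} (hx : x ≤ 0) : Real.exp x ≤ 1 + x + x ^ 2 / 2 := by
  have hmono : Monotone (fun x : ℝ => Real.exp x - (1 + x + x ^ 2 / 2)) := by
    have hderiv : ∀ y : ℝ, HasDerivAt (fun x : ℝ => Real.exp x - (1 + x + x ^ 2 / 2))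
        (Real.exp y - (1 + y)) y := by
      intro y
      have h1 : HasDerivAt (fun x : ℝ => 1 + x + x ^ 2 / 2) (1 + y) y := by
        have := (((hasDerivAt_id y).const_add 1).add ((hasDerivAt_pow 2 y).div_const 2))
        refine this.congr_deriv ?_
        simp
      exact (Real.hasDerivAt_exp y).sub h1
    apply monotone_of_deriv_nonneg
    · exact fun y => (hderiv y).differentiableAt
    · intro y
      rw [(hderiv y).deriv]
      have := Real.add_one_le_exp y
      linarith
  have h2 := hmono hx
  simp only [Real.exp_zero] at h2
  nlinarith [h2]

/-- The function appearing after integrating out `t` and `v`. -/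
noncomputable def A3.h (s : ℝ) : ℝ := if s < 1 then (-Real.log s - (1 - s)) / s else 0

/-- The function appearing after integrating out `t`, `v`, `w`. -/
noncomputable def A3.H (u : ℝ) : ℝ := (Real.log u) ^ 2 / 2 + Real.log u + 1 - u

lemma A3.h_nonneg {s : ℝ} (hs : 0 < s) : 0 ≤ A3.h s := by
  unfold A3.h
  split
  · next h1 =>
    apply div_nonneg _ hs.le
    have := Real.log_le_sub_one_of_pos hs
    linarith
  · exact le_rfl

lemma A3.H_nonneg {u : ℝ} (hu : 0 < u) (hu1 : u ≤ 1) : 0 ≤ A3.H u := by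
  have hlog : Real.log u ≤ 0 := Real.log_nonpos hu.le hu1
  have h2 := A3.exp_le_quadratic hlog
  rw [Real.exp_log hu] at h2
  unfold A3.H
  linarith

open Set in
/-- Stage 1: the `t`-integral. -/
lemma A3.stage1 (c d : ℝ) (hc : 0 ≤ c) (hd : d ≤ 1) :
    ∫⁻ t in Set.Icc (0:ℝ) 1, ENNReal.ofReal (if t < d then c else 0) =
      ENNReal.ofReal (c * max d 0) := by
  have hfun : (fun t : ℝ => ENNReal.ofReal (if t < d then c else 0)) =
      (Set.Iio d).indicator (fun _ => ENNReal.ofReal c) := by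
    funext t
    by_cases h : t < d <;> simp [Set.indicator, h]
  rw [hfun, lintegral_indicator measurableSet_Iio, Measure.restrict_restrict measurableSet_Iio,
    setLIntegral_const]
  by_cases hd0 : d ≤ 0
  · have hset : Set.Iio d ∩ Set.Icc (0:ℝ) 1 = ∅ := by
      apply Set.eq_empty_iff_forall_notMem.mpr
      intro x ⟨hx1, hx2, _⟩
      simp only [Set.mem_Iio] at hx1
      linarith
    rw [hset]
    simp [max_eq_right hd0]
  · push_neg at hd0
    have hset : Set.Iio d ∩ Set.Icc (0:ℝ) 1 = Set.Ico 0 d := by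
      ext x
      simp only [Set.mem_inter_iff, Set.mem_Iio, Set.mem_Icc, Set.mem_Ico]
      constructor
      · rintro ⟨h1, h2, h3⟩; exact ⟨h2, h1⟩
      · rintro ⟨h1, h2⟩; exact ⟨h2, h1, by linarith⟩
    rw [hset, Real.volume_Ico, sub_zero, max_eq_left hd0.le, ENNReal.ofReal_mul hc]

open Set in
lemma A3.stage2_int (s : ℝ) (hs : 0 < s) :
    IntegrableOn (fun v => 1 / (s * (s + v)) * max (1 - (s + v)) 0) (Set.Icc 0 1) volume := by
  apply ContinuousOn.integrableOn_Icc
  apply ContinuousOn.mul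
  · apply ContinuousOn.div continuousOn_const (by fun_prop)
    intro v hv
    have : 0 < s + v := by linarith [hv.1]
    positivity
  · fun_prop

open Set in
lemma A3.stage2_val (s : ℝ) (hs : 0 < s) :
    ∫ v in Set.Icc (0:ℝ) 1, 1 / (s * (s + v)) * max (1 - (s + v)) 0 = A3.h s := by
  rw [integral_Icc_eq_integral_Ioc, ← intervalIntegral.integral_of_le zero_le_one]
  by_cases h1 : 1 ≤ s
  · rw [A3.h, if_neg (not_lt.mpr h1)]
    rw [intervalIntegral.integral_congr (g := fun _ => (0:ℝ))
      (fun v hv => by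
        rw [Set.uIcc_of_le zero_le_one] at hv
        have : max (1 - (s + v)) 0 = 0 := max_eq_right (by linarith [hv.1])
        simp [this])]
    simp
  · push_neg at h1
    have h0 : (0:ℝ) ≤ 1 - s := by linarith
    have hsub1 : Set.uIcc (0:ℝ) (1 - s) ⊆ Set.Icc 0 1 := by
      rw [Set.uIcc_of_le h0]
      exact Set.Icc_subset_Icc le_rfl (by linarith)
    have hsub2 : Set.uIcc (1 - s) (1:ℝ) ⊆ Set.Icc 0 1 := by
      rw [Set.uIcc_of_le (by linarith)]
      exact Set.Icc_subset_Icc h0 le_rfl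
    have hII : IntegrableOn (fun v => 1 / (s * (s + v)) * max (1 - (s + v)) 0)
        (Set.Icc 0 1) volume := A3.stage2_int s hs
    have hi1 : IntervalIntegrable (fun v => 1 / (s * (s + v)) * max (1 - (s + v)) 0)
        volume 0 (1 - s) :=
      intervalIntegrable_iff.mpr (hII.mono_set ((Set.uIoc_subset_uIcc).trans hsub1))
    have hi2 : IntervalIntegrable (fun v => 1 / (s * (s + v)) * max (1 - (s + v)) 0)
        volume (1 - s) 1 :=
      intervalIntegrable_iff.mpr (hII.mono_set ((Set.uIoc_subset_uIcc).trans hsub2))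
    rw [← intervalIntegral.integral_add_adjacent_intervals hi1 hi2]
    have hright : ∫ v in (1 - s)..1, 1 / (s * (s + v)) * max (1 - (s + v)) 0 = 0 := by
      rw [intervalIntegral.integral_congr (g := fun _ => (0:ℝ))
        (fun v hv => by
          rw [Set.uIcc_of_le (by linarith : (1:ℝ) - s ≤ 1)] at hv
          have : max (1 - (s + v)) 0 = 0 := max_eq_right (by linarith [hv.1])
          simp [this])]
      simp
    have hleft : ∫ v in (0:ℝ)..(1 - s), 1 / (s * (s + v)) * max (1 - (s + v)) 0 =
        (-Real.log s - (1 - s)) / s := by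
      have heq : Set.EqOn (fun v => 1 / (s * (s + v)) * max (1 - (s + v)) 0)
          (fun v => ((s + v)⁻¹ - 1) / s) (Set.uIcc 0 (1 - s)) := by
        intro v hv
        rw [Set.uIcc_of_le h0] at hv
        have hsv : 0 < s + v := by linarith [hv.1]
        have hmax : max (1 - (s + v)) 0 = 1 - (s + v) := max_eq_left (by linarith [hv.2])
        simp only [hmax]
        rw [eq_div_iff hs.ne']
        field_simp
      rw [intervalIntegral.integral_congr heq]
      have hderiv : ∀ v ∈ Set.uIcc (0:ℝ) (1 - s),
          HasDerivAt (fun v => (Real.log (s + v) - v) / s) (((s + v)⁻¹ - 1) / s) v := by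
        intro v hv
        rw [Set.uIcc_of_le h0] at hv
        have hsv : 0 < s + v := by linarith [hv.1]
        have hl : HasDerivAt (fun v : ℝ => Real.log (s + v)) ((s + v)⁻¹) v := by
          have := (((hasDerivAt_id v).const_add s).log hsv.ne')
          simpa using this
        exact (hl.sub (hasDerivAt_id v)).div_const s
      have hcont : IntervalIntegrable (fun v => ((s + v)⁻¹ - 1) / s) volume 0 (1 - s) := by
        apply ContinuousOn.intervalIntegrable
        apply ContinuousOn.div_const
        apply ContinuousOn.sub _ continuousOn_const
        apply ContinuousOn.inv₀ (by fun_prop)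
        intro v hv
        rw [Set.uIcc_of_le h0] at hv
        have : 0 < s + v := by linarith [hv.1]
        exact this.ne'
      rw [intervalIntegral.integral_eq_sub_of_hasDerivAt hderiv hcont]
      rw [show s + (1 - s) = 1 by ring, Real.log_one]
      ring
    rw [hleft, hright, A3.h, if_pos h1]
    ring

open Set in
lemma A3.stage3_eqOn_left {u : ℝ} (hu : 0 < u) (hu1 : u < 1) :
    Set.EqOn (fun w => -Real.log (u + w) * (u + w)⁻¹ - (u + w)⁻¹ + 1)
      (fun w => A3.h (u + w)) (Set.Icc 0 (1 - u)) := by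
  intro w hw
  have hpos : 0 < u + w := by linarith [hw.1]
  by_cases hlt : u + w < 1
  · simp only [A3.h, if_pos hlt]
    field_simp
    ring
  · have heq : u + w = 1 := le_antisymm (by linarith [hw.2]) (not_lt.mp hlt)
    simp [A3.h, if_neg hlt, heq]

open Set in
lemma A3.stage3_int (u : ℝ) (hu : 0 < u) (hu1 : u < 1) :
    IntegrableOn (fun w => A3.h (u + w)) (Set.Icc 0 1) volume := by
  have h0 : (0:ℝ) ≤ 1 - u := by linarith
  have hunion : Set.Icc (0:ℝ) (1 - u) ∪ Set.Icc (1 - u) 1 = Set.Icc 0 1 :=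
    Set.Icc_union_Icc_eq_Icc h0 (by linarith)
  rw [← hunion]
  apply IntegrableOn.union
  · apply IntegrableOn.congr_fun _ (A3.stage3_eqOn_left hu hu1) measurableSet_Icc
    apply ContinuousOn.integrableOn_Icc
    have hcont_inv : ContinuousOn (fun w : ℝ => (u + w)⁻¹) (Set.Icc 0 (1 - u)) := by
      apply ContinuousOn.inv₀ (by fun_prop)
      intro w hw
      have : 0 < u + w := by linarith [hw.1]
      exact this.ne'
    have hcont_log : ContinuousOn (fun w : ℝ => Real.log (u + w)) (Set.Icc 0 (1 - u)) := by
      apply ContinuousOn.log (by fun_prop)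
      intro w hw
      have : 0 < u + w := by linarith [hw.1]
      exact this.ne'
    exact ((hcont_log.neg.mul hcont_inv).sub hcont_inv).add continuousOn_const
  · have heq0 : Set.EqOn (fun _ : ℝ => (0:ℝ)) (fun w => A3.h (u + w)) (Set.Icc (1 - u) 1) := by
      intro w hw
      have hge : ¬ (u + w < 1) := by push_neg; linarith [hw.1]
      simp [A3.h, if_neg hge]
    exact (integrableOn_zero).congr_fun heq0 measurableSet_Icc

open Set in
lemma A3.stage3_val (u : ℝ) (hu : 0 < u) (hu1 : u < 1) :
    ∫ w in Set.Icc (0:ℝ) 1, A3.h (u + w) = A3.H u := by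
  have h0 : (0:ℝ) ≤ 1 - u := by linarith
  rw [integral_Icc_eq_integral_Ioc, ← intervalIntegral.integral_of_le zero_le_one]
  have hII := A3.stage3_int u hu hu1
  have hsub1 : Set.uIcc (0:ℝ) (1 - u) ⊆ Set.Icc 0 1 := by
    rw [Set.uIcc_of_le h0]; exact Set.Icc_subset_Icc le_rfl (by linarith)
  have hsub2 : Set.uIcc (1 - u) (1:ℝ) ⊆ Set.Icc 0 1 := by
    rw [Set.uIcc_of_le (by linarith)]; exact Set.Icc_subset_Icc h0 le_rfl
  have hi1 : IntervalIntegrable (fun w => A3.h (u + w)) volume 0 (1 - u) :=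
    intervalIntegrable_iff.mpr (hII.mono_set ((Set.uIoc_subset_uIcc).trans hsub1))
  have hi2 : IntervalIntegrable (fun w => A3.h (u + w)) volume (1 - u) 1 :=
    intervalIntegrable_iff.mpr (hII.mono_set ((Set.uIoc_subset_uIcc).trans hsub2))
  rw [← intervalIntegral.integral_add_adjacent_intervals hi1 hi2]
  have hright : ∫ w in (1 - u)..1, A3.h (u + w) = 0 := by
    rw [intervalIntegral.integral_congr (g := fun _ => (0:ℝ))
      (fun w hw => by
        rw [Set.uIcc_of_le (by linarith : (1:ℝ) - u ≤ 1)] at hw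
        have : ¬ (u + w < 1) := by push_neg; linarith [hw.1]
        simp [A3.h, if_neg this])]
    simp
  have hleft : ∫ w in (0:ℝ)..(1 - u), A3.h (u + w) = A3.H u := by
    have heq : Set.EqOn (fun w => A3.h (u + w))
        (fun w => -Real.log (u + w) * (u + w)⁻¹ - (u + w)⁻¹ + 1) (Set.uIcc 0 (1 - u)) := by
      rw [Set.uIcc_of_le h0]
      exact fun w hw => ((A3.stage3_eqOn_left hu hu1) hw).symm
    rw [intervalIntegral.integral_congr heq]
    have hderiv : ∀ w ∈ Set.uIcc (0:ℝ) (1 - u),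
        HasDerivAt (fun w => -(Real.log (u + w)) ^ 2 / 2 - Real.log (u + w) + (u + w))
          (-Real.log (u + w) * (u + w)⁻¹ - (u + w)⁻¹ + 1) w := by
      intro w hw
      rw [Set.uIcc_of_le h0] at hw
      have hpos : 0 < u + w := by linarith [hw.1]
      have hl : HasDerivAt (fun w : ℝ => Real.log (u + w)) ((u + w)⁻¹) w := by
        simpa using (((hasDerivAt_id w).const_add u).log hpos.ne')
      have hsq : HasDerivAt (fun w : ℝ => (Real.log (u + w)) ^ 2)
          (2 * Real.log (u + w) * (u + w)⁻¹) w := by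
        have := hl.pow 2
        simpa [Pi.pow_def] using this
      have := ((hsq.neg.div_const 2).sub hl).add ((hasDerivAt_id w).const_add u)
      refine this.congr_deriv ?_
      ring
    have hcont : IntervalIntegrable
        (fun w => -Real.log (u + w) * (u + w)⁻¹ - (u + w)⁻¹ + 1) volume 0 (1 - u) := by
      apply ContinuousOn.intervalIntegrable
      rw [Set.uIcc_of_le h0]
      have hcont_inv : ContinuousOn (fun w : ℝ => (u + w)⁻¹) (Set.Icc 0 (1 - u)) := by
        apply ContinuousOn.inv₀ (by fun_prop)
        intro w hw
        have : 0 < u + w := by linarith [hw.1]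
        exact this.ne'
      have hcont_log : ContinuousOn (fun w : ℝ => Real.log (u + w)) (Set.Icc 0 (1 - u)) := by
        apply ContinuousOn.log (by fun_prop)
        intro w hw
        have : 0 < u + w := by linarith [hw.1]
        exact this.ne'
      exact ((hcont_log.neg.mul hcont_inv).sub hcont_inv).add continuousOn_const
    rw [intervalIntegral.integral_eq_sub_of_hasDerivAt hderiv hcont]
    rw [show u + (1 - u) = 1 by ring, Real.log_one]
    simp [A3.H]
    ring
  rw [hleft, hright]
  ring

open Set in
/-- Stage 4 pieces: FTC on `[a, 1]`. -/
lemma A3.stage4_piece {a : ℝ} (ha : 0 < a) (ha1 : a ≤ 1) :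
    IntegrableOn A3.H (Set.Icc a 1) volume ∧
      ∫ u in Set.Icc a 1, A3.H u = 1/2 - (a * (Real.log a) ^ 2 / 2 + a - a ^ 2 / 2) := by
  have hcont : ContinuousOn A3.H (Set.Icc a 1) := by
    have hlog : ContinuousOn Real.log (Set.Icc a 1) :=
      Real.continuousOn_log.mono (fun x hx => by
        simp only [Set.mem_compl_iff, Set.mem_singleton_iff]
        have : 0 < x := lt_of_lt_of_le ha hx.1
        exact this.ne')
    exact ((((hlog.pow 2).div_const 2).add hlog).add continuousOn_const).sub continuousOn_id
  refine ⟨hcont.integrableOn_Icc, ?_⟩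
  rw [integral_Icc_eq_integral_Ioc, ← intervalIntegral.integral_of_le ha1]
  have hderiv : ∀ x ∈ Set.uIcc a 1,
      HasDerivAt (fun x => x * (Real.log x) ^ 2 / 2 + x - x ^ 2 / 2) (A3.H x) x := by
    intro x hx
    rw [Set.uIcc_of_le ha1] at hx
    have hxpos : 0 < x := lt_of_lt_of_le ha hx.1
    have hl : HasDerivAt Real.log x⁻¹ x := Real.hasDerivAt_log hxpos.ne'
    have hsq : HasDerivAt (fun x : ℝ => (Real.log x) ^ 2) (2 * Real.log x * x⁻¹) x := by
      simpa [Pi.pow_def] using hl.pow 2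
    have hmul : HasDerivAt (fun x : ℝ => x * (Real.log x) ^ 2)
        (1 * (Real.log x) ^ 2 + x * (2 * Real.log x * x⁻¹)) x :=
      (hasDerivAt_id x).mul hsq
    have := ((hmul.div_const 2).add (hasDerivAt_id x)).sub ((hasDerivAt_pow 2 x).div_const 2)
    refine this.congr_deriv ?_
    unfold A3.H
    field_simp
    ring
  have hcont' : IntervalIntegrable A3.H volume a 1 := by
    apply ContinuousOn.intervalIntegrable
    rw [Set.uIcc_of_le ha1]
    exact hcont
  rw [intervalIntegral.integral_eq_sub_of_hasDerivAt hderiv hcont']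
  rw [Real.log_one]
  ring

open Set Filter in
lemma A3.stage4 :
    IntegrableOn A3.H (Set.Ioc 0 1) volume ∧
      ∫ u in Set.Ioc (0:ℝ) 1, A3.H u = 1/2 := by
  set a : ℕ → ℝ := fun n => 1 / (n + 1) with ha_def
  have han : ∀ n : ℕ, 0 < a n ∧ a n ≤ 1 := by
    intro n
    refine ⟨by positivity, ?_⟩
    show (1:ℝ) / (n + 1) ≤ 1
    rw [div_le_one (by positivity)]
    simp
  have ha : Tendsto a atTop (𝓝 0) := tendsto_one_div_add_atTop_nhds_zero_nat
  have hφ : AECover ((volume : Measure ℝ).restrict (Set.Ioc 0 1)) atTop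
      (fun n => Set.Icc (a n) 1) := aecover_Ioc_of_Icc ha tendsto_const_nhds
  have hset : ∀ n : ℕ, Set.Icc (a n) 1 ∩ Set.Ioc (0:ℝ) 1 = Set.Icc (a n) 1 := by
    intro n
    apply Set.inter_eq_left.mpr
    intro x hx
    exact ⟨lt_of_lt_of_le (han n).1 hx.1, hx.2⟩
  have hfi : ∀ n : ℕ, IntegrableOn A3.H (Set.Icc (a n) 1)
      ((volume : Measure ℝ).restrict (Set.Ioc 0 1)) := by
    intro n
    rw [IntegrableOn, Measure.restrict_restrict measurableSet_Icc, hset n]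
    exact (A3.stage4_piece (han n).1 (han n).2).1
  have hnng : 0 ≤ᵐ[(volume : Measure ℝ).restrict (Set.Ioc 0 1)] A3.H :=
    (ae_restrict_mem measurableSet_Ioc).mono fun u hu => A3.H_nonneg hu.1 hu.2
  have hC : Tendsto (fun n => a n * (Real.log (a n)) ^ 2) atTop (𝓝 0) := by
    have h2 : Tendsto (fun x : ℝ => Real.log x * x ^ (1/2 : ℝ)) (𝓝[>] 0) (𝓝 0) :=
      tendsto_log_mul_rpow_nhdsGT_zero (by norm_num)
    have ha' : Tendsto a atTop (𝓝[>] 0) :=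
      tendsto_nhdsWithin_of_tendsto_nhds_of_eventually_within _ ha
        (Eventually.of_forall fun n => (han n).1)
    have h3 := (h2.comp ha').mul (h2.comp ha')
    rw [mul_zero] at h3
    apply h3.congr
    intro n
    have hpos := (han n).1
    simp only [Function.comp_apply]
    rw [show Real.log (a n) * (a n) ^ (1/2 : ℝ) * (Real.log (a n) * (a n) ^ (1/2 : ℝ))
        = (Real.log (a n)) ^ 2 * ((a n) ^ (1/2 : ℝ) * (a n) ^ (1/2 : ℝ)) by ring]
    rw [← Real.rpow_add hpos]
    norm_num [Real.rpow_one]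
    ring
  have htendsto : Tendsto
      (fun n => ∫ x in Set.Icc (a n) 1, A3.H x ∂((volume : Measure ℝ).restrict (Set.Ioc 0 1)))
      atTop (𝓝 (1/2)) := by
    have heqn : ∀ n : ℕ,
        (∫ x in Set.Icc (a n) 1, A3.H x ∂((volume : Measure ℝ).restrict (Set.Ioc 0 1)))
          = 1/2 - (a n * (Real.log (a n)) ^ 2 / 2 + a n - (a n) ^ 2 / 2) := by
      intro n
      rw [Measure.restrict_restrict measurableSet_Icc, hset n]
      exact (A3.stage4_piece (han n).1 (han n).2).2
    simp only [heqn]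
    have hfull : Tendsto (fun n => a n * (Real.log (a n)) ^ 2 / 2 + a n - (a n) ^ 2 / 2)
        atTop (𝓝 0) := by
      have := ((hC.div_const 2).add ha).sub ((ha.pow 2).div_const 2)
      simpa using this
    have := tendsto_const_nhds (x := (1:ℝ)/2) (f := atTop (α := ℕ)) |>.sub hfull
    simpa using this
  exact ⟨hφ.integrable_of_integral_tendsto_of_nonneg_ae (1/2) hfi hnng htendsto,
    hφ.integral_eq_of_tendsto_of_nonneg_ae (1/2) hnng hfi htendsto⟩

/-- The integrand of the four-dimensional integral. -/
noncomputable def A3.f : ℝ × ℝ × ℝ × ℝ → ℝ := fun p =>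
  if p.1 + p.2.1 + p.2.2.1 + p.2.2.2 < 1 then
    1 / ((p.2.1 + p.2.2.2) * (p.2.1 + p.2.2.1 + p.2.2.2))
  else 0

/-- The integrand after integrating out `t`. -/
noncomputable def A3.g : ℝ × ℝ × ℝ → ℝ := fun q =>
  1 / ((q.1 + q.2.2) * (q.1 + q.2.1 + q.2.2)) * max (1 - (q.1 + q.2.1 + q.2.2)) 0

lemma A3.f_meas : Measurable A3.f := by
  apply Measurable.ite (measurableSet_lt (by fun_prop) measurable_const) _ measurable_const
  fun_prop

lemma A3.g_meas : Measurable A3.g := by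
  unfold A3.g
  fun_prop

/-- The four-dimensional integral arising from the nested-configuration term `A₃`:
`∫_{[0,1]⁴} 𝟙_{t+u+v+w<1}/((u+w)(u+v+w)) dt du dv dw = 1/2`; in particular the
integrand is Lebesgue integrable on `[0,1]⁴`. Here `p = (t, u, v, w)`. -/
theorem integral_A3_indicator :
    IntegrableOn
      (fun p : ℝ × ℝ × ℝ × ℝ =>
        if p.1 + p.2.1 + p.2.2.1 + p.2.2.2 < 1 then
          1 / ((p.2.1 + p.2.2.2) * (p.2.1 + p.2.2.1 + p.2.2.2))
        else 0)
      (Set.Icc 0 1 ×ˢ Set.Icc 0 1 ×ˢ Set.Icc 0 1 ×ˢ Set.Icc 0 1) volume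
    ∧ (∫ p in (Set.Icc 0 1 ×ˢ Set.Icc 0 1 ×ˢ Set.Icc 0 1 ×ˢ Set.Icc 0 1 :
          Set (ℝ × ℝ × ℝ × ℝ)),
        if p.1 + p.2.1 + p.2.2.1 + p.2.2.2 < 1 then
          1 / ((p.2.1 + p.2.2.2) * (p.2.1 + p.2.2.1 + p.2.2.2))
        else 0) = 1/2 := by
  set I : Set ℝ := Set.Icc 0 1 with hI_def
  set ν : Measure ℝ := volume.restrict I with hν_def
  have hbox2 : (volume : Measure (ℝ × ℝ)).restrict (I ×ˢ I) = ν.prod ν := by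
    rw [Measure.volume_eq_prod, ← Measure.prod_restrict]
  have hbox3 : (volume : Measure (ℝ × ℝ × ℝ)).restrict (I ×ˢ I ×ˢ I) = ν.prod (ν.prod ν) := by
    rw [Measure.volume_eq_prod, ← Measure.prod_restrict, hbox2]
  have hbox4 : (volume : Measure (ℝ × ℝ × ℝ × ℝ)).restrict (I ×ˢ I ×ˢ I ×ˢ I) =
      ν.prod (ν.prod (ν.prod ν)) := by
    rw [Measure.volume_eq_prod, ← Measure.prod_restrict, hbox3]
  -- key lintegral computation
  have key : (∫⁻ p in (I ×ˢ I ×ˢ I ×ˢ I : Set (ℝ × ℝ × ℝ × ℝ)), ENNReal.ofReal (A3.f p)) =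
      ENNReal.ofReal (1/2) := by
    rw [hbox4]
    have hm4 : AEMeasurable (fun p : ℝ × ℝ × ℝ × ℝ => ENNReal.ofReal (A3.f p))
        (ν.prod (ν.prod (ν.prod ν))) :=
      (ENNReal.measurable_ofReal.comp A3.f_meas).aemeasurable
    rw [lintegral_prod _ hm4]
    rw [lintegral_lintegral_swap hm4]
    have step1 : ∀ᵐ q ∂(ν.prod (ν.prod ν)),
        (∫⁻ t, ENNReal.ofReal (A3.f (t, q)) ∂ν) = ENNReal.ofReal (A3.g q) := by
      have hq : ∀ᵐ q ∂(ν.prod (ν.prod ν)), q ∈ (I ×ˢ I ×ˢ I : Set (ℝ × ℝ × ℝ)) := by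
        rw [← hbox3]
        exact ae_restrict_mem (measurableSet_Icc.prod (measurableSet_Icc.prod measurableSet_Icc))
      filter_upwards [hq] with q hq
      obtain ⟨hu, hv, hw⟩ := hq
      simp only [hI_def, Set.mem_Icc] at hu hv hw
      have hcond : ∀ t : ℝ, A3.f (t, q) =
          if t < 1 - (q.1 + q.2.1 + q.2.2) then
            1 / ((q.1 + q.2.2) * (q.1 + q.2.1 + q.2.2)) else 0 := by
        intro t
        unfold A3.f
        simp only
        congr 1
        · simp only [eq_iff_iff]
          constructor <;> intro <;> linarith
      simp_rw [hcond]
      have hc : 0 ≤ 1 / ((q.1 + q.2.2) * (q.1 + q.2.1 + q.2.2)) := by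
        apply one_div_nonneg.mpr
        apply mul_nonneg
        · linarith [hu.1, hw.1]
        · linarith [hu.1, hv.1, hw.1]
      rw [A3.stage1 _ _ hc (by linarith [hu.1, hv.1, hw.1])]
      rfl
    rw [lintegral_congr_ae step1]
    have hm3 : AEMeasurable (fun q : ℝ × ℝ × ℝ => ENNReal.ofReal (A3.g q))
        (ν.prod (ν.prod ν)) := (ENNReal.measurable_ofReal.comp A3.g_meas).aemeasurable
    rw [lintegral_prod _ hm3]
    have step2 : ∀ᵐ u ∂ν, (∫⁻ vw, ENNReal.ofReal (A3.g (u, vw)) ∂(ν.prod ν)) =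
        ENNReal.ofReal (A3.H u) := by
      have hae : ∀ᵐ u ∂ν, u ∈ Set.Ioo (0:ℝ) 1 := by
        rw [hν_def, hI_def, ← Measure.restrict_congr_set Ioo_ae_eq_Icc]
        exact ae_restrict_mem measurableSet_Ioo
      filter_upwards [hae] with u hu
      have hm2 : AEMeasurable (fun vw : ℝ × ℝ => ENNReal.ofReal (A3.g (u, vw))) (ν.prod ν) := by
        apply Measurable.aemeasurable
        exact ENNReal.measurable_ofReal.comp (A3.g_meas.comp (by fun_prop))
      rw [lintegral_prod _ hm2]
      rw [lintegral_lintegral_swap hm2]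
      have stepv : ∀ᵐ w ∂ν, (∫⁻ v, ENNReal.ofReal (A3.g (u, v, w)) ∂ν) =
          ENNReal.ofReal (A3.h (u + w)) := by
        filter_upwards [ae_restrict_mem measurableSet_Icc] with w hw
        have hs : 0 < u + w := by
          have := hu.1; have := hw.1; linarith
        have hgeq : ∀ v : ℝ, A3.g (u, v, w) =
            1 / ((u + w) * ((u + w) + v)) * max (1 - ((u + w) + v)) 0 := by
          intro v
          unfold A3.g
          simp only
          rw [show u + v + w = (u + w) + v by ring]
        simp_rw [hgeq]
        have hnn : 0 ≤ᵐ[ν] fun v => 1 / ((u + w) * ((u + w) + v)) * max (1 - ((u + w) + v)) 0 := by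
          apply (ae_restrict_mem measurableSet_Icc).mono
          intro v hv
          apply mul_nonneg _ (le_max_right _ 0)
          apply one_div_nonneg.mpr
          have : 0 < (u + w) + v := by linarith [hv.1]
          positivity
        rw [← ofReal_integral_eq_lintegral_ofReal (A3.stage2_int (u + w) hs) hnn]
        rw [A3.stage2_val (u + w) hs]
      rw [lintegral_congr_ae stepv]
      have hnn3 : 0 ≤ᵐ[ν] fun w => A3.h (u + w) := by
        apply (ae_restrict_mem measurableSet_Icc).mono
        intro w hw
        exact A3.h_nonneg (by linarith [hu.1, hw.1])
      rw [← ofReal_integral_eq_lintegral_ofReal (A3.stage3_int u hu.1 hu.2) hnn3]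
      rw [A3.stage3_val u hu.1 hu.2]
    rw [lintegral_congr_ae step2]
    have hνIoc : ν = volume.restrict (Set.Ioc 0 1) := by
      rw [hν_def, hI_def, ← Measure.restrict_congr_set Ioc_ae_eq_Icc]
    rw [hνIoc]
    have hnn4 : 0 ≤ᵐ[volume.restrict (Set.Ioc (0:ℝ) 1)] A3.H :=
      (ae_restrict_mem measurableSet_Ioc).mono fun u hu => A3.H_nonneg hu.1 hu.2
    rw [← ofReal_integral_eq_lintegral_ofReal A3.stage4.1 hnn4, A3.stage4.2]
  -- conclusion
  have hbox_meas : MeasurableSet (I ×ˢ I ×ˢ I ×ˢ I : Set (ℝ × ℝ × ℝ × ℝ)) :=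
    measurableSet_Icc.prod (measurableSet_Icc.prod (measurableSet_Icc.prod measurableSet_Icc))
  have hnonneg : ∀ᵐ p ∂(volume.restrict (I ×ˢ I ×ˢ I ×ˢ I : Set (ℝ × ℝ × ℝ × ℝ))),
      0 ≤ A3.f p := by
    apply (ae_restrict_mem hbox_meas).mono
    intro p hp
    obtain ⟨h1, h2, h3, h4⟩ := hp
    simp only [hI_def, Set.mem_Icc] at h1 h2 h3 h4
    unfold A3.f
    split
    · apply one_div_nonneg.mpr
      apply mul_nonneg
      · linarith [h2.1, h4.1]
      · linarith [h2.1, h3.1, h4.1]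
    · exact le_rfl
  have hInt : IntegrableOn A3.f (I ×ˢ I ×ˢ I ×ˢ I : Set (ℝ × ℝ × ℝ × ℝ)) volume := by
    refine ⟨A3.f_meas.aestronglyMeasurable.restrict, ?_⟩
    have hlin : (∫⁻ p in (I ×ˢ I ×ˢ I ×ˢ I : Set (ℝ × ℝ × ℝ × ℝ)), (‖A3.f p‖₊ : ENNReal)) =
        ∫⁻ p in (I ×ˢ I ×ˢ I ×ˢ I : Set (ℝ × ℝ × ℝ × ℝ)), ENNReal.ofReal (A3.f p) := by
      apply lintegral_congr_ae
      exact hnonneg.mono fun p hp => Real.enorm_eq_ofReal hp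
    show (∫⁻ p in (I ×ˢ I ×ˢ I ×ˢ I : Set (ℝ × ℝ × ℝ × ℝ)), (‖A3.f p‖₊ : ENNReal)) < ⊤
    rw [hlin, key]
    exact ENNReal.ofReal_lt_top
  have hVal : (∫ p in (I ×ˢ I ×ˢ I ×ˢ I : Set (ℝ × ℝ × ℝ × ℝ)), A3.f p) = 1/2 := by
    rw [integral_eq_lintegral_of_nonneg_ae hnonneg A3.f_meas.aestronglyMeasurable.restrict]
    rw [key, ENNReal.toReal_ofReal (by norm_num)]
  exact ⟨hInt, hVal⟩
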